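/- For the step set S = {(0,1),(0,-1)} (up and down steps confined to ℕ²), the total number of walks of length n starting at the origin equals the central binomial coefficient C(n, ⌊n/2⌋). -/

import Mathlib

open Finset

/-- Number of `n`-step walks in the quarter plane from the origin to `p`,
with steps from `S`; walks must stay in `ℕ²`. -/
def walkCount (S : Finset (ℤ × ℤ)) : ℕ → ℤ × ℤ → ℕ
  | 0, p => if p = (0, 0) then 1 else 0
  | n + 1, p =>
      if 0 ≤ p.1 ∧ 0 ≤ p.2 then ∑ s ∈ S, walkCount S n (p - s) else 0

/-- Total number of `n`-step quarter-plane walks starting at the origin. -/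
def totalCount (S : Finset (ℤ × ℤ)) (n : ℕ) : ℕ :=
  ∑ i ∈ Finset.range (n + 1), ∑ j ∈ Finset.range (n + 1),
    walkCount S n ((i : ℤ), (j : ℤ))

/-- One-dimensional Dyck-prefix counts. -/
def dAux : ℕ → ℕ → ℕ
  | 0, j => if j = 0 then 1 else 0
  | n + 1, 0 => dAux n 1
  | n + 1, j + 1 => dAux n j + dAux n (j + 2)

lemma walkCount_eq (n : ℕ) : ∀ p : ℤ × ℤ,
    walkCount {(0, 1), (0, -1)} n p =
      if p.1 = 0 ∧ 0 ≤ p.2 then dAux n p.2.toNat else 0 := by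
  induction n with
  | zero =>
    rintro ⟨a, b⟩
    simp only [walkCount, dAux, Prod.ext_iff]
    split_ifs with h1 h2 h3 h2 <;> simp_all <;> omega
  | succ n ih =>
    rintro ⟨a, b⟩
    rw [walkCount, Finset.sum_pair (by decide)]
    have e1 : ((a, b) : ℤ × ℤ) - (0, 1) = (a, b - 1) := by
      simp [Prod.ext_iff]
    have e2 : ((a, b) : ℤ × ℤ) - (0, -1) = (a, b + 1) := by
      simp [Prod.ext_iff]
    rw [e1, e2, ih, ih]
    by_cases ha : a = 0
    · subst ha
      by_cases hb : 0 ≤ b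
      · obtain ⟨m, rfl⟩ := Int.eq_ofNat_of_zero_le hb
        cases m with
        | zero => simp [dAux]
        | succ j =>
          have t1 : ((j : ℤ) + 1 - 1).toNat = j := by omega
          have t2 : ((j : ℤ) + 1 + 1).toNat = j + 2 := by omega
          have t3 : ((j : ℤ) + 1).toNat = j + 1 := by omega
          push_cast
          rw [t1, t2, t3]
          have h4 : (0:ℤ) ≤ (j:ℤ) + 1 := by omega
          have h5 : (0:ℤ) ≤ (j:ℤ) + 1 + 1 := by omega
          simp [dAux, h4, h5]
      · simp only [hb] ; split_ifs <;> simp_all <;> omega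
    · split_ifs <;> simp_all
  -- end

lemma totalCount_eq (n : ℕ) :
    totalCount {(0, 1), (0, -1)} n = ∑ j ∈ Finset.range (n + 1), dAux n j := by
  unfold totalCount
  rw [Finset.sum_eq_single 0]
  · refine Finset.sum_congr rfl fun j _ => ?_
    rw [walkCount_eq]
    simp
  · intro i _ hi
    refine Finset.sum_eq_zero fun j _ => ?_
    rw [walkCount_eq]
    have : ¬ ((i : ℤ) = 0) := by exact_mod_cast hi
    simp [this, hi]
  · intro h
    exact absurd (Finset.mem_range.2 (Nat.succ_pos n)) h

/-- Closed form (as an integer). -/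
def cAux (n j : ℕ) : ℤ :=
  if (n + j) % 2 = 0 then
    (n.choose ((n + j) / 2) : ℤ) - n.choose ((n + j) / 2 + 1)
  else 0

lemma pascalZ (n k : ℕ) :
    ((n + 1).choose (k + 1) : ℤ) = n.choose k + n.choose (k + 1) := by
  exact_mod_cast Nat.choose_succ_succ n k

lemma cAux_rec0 (n : ℕ) : cAux (n + 1) 0 = cAux n 1 := by
  unfold cAux
  rcases Nat.even_or_odd n with ⟨t, ht⟩ | ⟨t, ht⟩
  · subst ht
    have h1 : (t + t + 1 + 0) % 2 = 1 := by omega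
    have h2 : (t + t + 1) % 2 = 1 := by omega
    simp [h1, h2]
  · subst ht
    have h1 : (2 * t + 1 + 1 + 0) % 2 = 0 := by omega
    have h2 : (2 * t + 1 + 1) % 2 = 0 := by omega
    have e1 : (2 * t + 1 + 1 + 0) / 2 = t + 1 := by omega
    have e2 : (2 * t + 1 + 1) / 2 = t + 1 := by omega
    rw [if_pos h1, if_pos h2, e1]
    have p1 : ((2 * t + 1 + 1).choose (t + 1) : ℤ)
        = (2 * t + 1).choose t + (2 * t + 1).choose (t + 1) := pascalZ _ _
    have p2 : ((2 * t + 1 + 1).choose (t + 1 + 1) : ℤ)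
        = (2 * t + 1).choose (t + 1) + (2 * t + 1).choose (t + 1 + 1) := pascalZ _ _
    have sym : (2 * t + 1).choose t = (2 * t + 1).choose (t + 1) := by
      have h : t + 1 ≤ 2 * t + 1 := by omega
      have := Nat.choose_symm h
      have e : 2 * t + 1 - (t + 1) = t := by omega
      rw [e] at this
      exact this
    rw [p1, p2, sym]
    ring

lemma cAux_rec (n j : ℕ) : cAux (n + 1) (j + 1) = cAux n j + cAux n (j + 2) := by
  unfold cAux
  rcases Nat.even_or_odd (n + j) with ⟨t, ht⟩ | ⟨t, ht⟩
  · have h1 : (n + 1 + (j + 1)) % 2 = 0 := by omega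
    have h2 : (n + j) % 2 = 0 := by omega
    have h3 : (n + (j + 2)) % 2 = 0 := by omega
    have e1 : (n + 1 + (j + 1)) / 2 = t + 1 := by omega
    have e2 : (n + j) / 2 = t := by omega
    have e3 : (n + (j + 2)) / 2 = t + 1 := by omega
    rw [if_pos h1, if_pos h2, if_pos h3, e1, e2, e3]
    have p1 : ((n + 1).choose (t + 1) : ℤ) = n.choose t + n.choose (t + 1) := pascalZ _ _
    have p2 : ((n + 1).choose (t + 1 + 1) : ℤ)
        = n.choose (t + 1) + n.choose (t + 1 + 1) := pascalZ _ _
    rw [p1, p2]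
    ring
  · have h1 : ¬ (n + 1 + (j + 1)) % 2 = 0 := by omega
    have h2 : ¬ (n + j) % 2 = 0 := by omega
    have h3 : ¬ (n + (j + 2)) % 2 = 0 := by omega
    rw [if_neg h1, if_neg h2, if_neg h3]
    ring

lemma dAux_eq_cAux : ∀ n j : ℕ, (dAux n j : ℤ) = cAux n j := by
  intro n
  induction n with
  | zero =>
    intro j
    unfold dAux cAux
    rcases j with _ | j
    · norm_num
    · have : ¬ (j + 1 = 0) := by omega
      rw [if_neg this]
      rcases Nat.even_or_odd (0 + (j + 1)) with h | h
      · rw [if_pos (Nat.even_iff.mp h)]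
        have hm : (0 + (j + 1)) % 2 = 0 := Nat.even_iff.mp h
        have hlt : 0 < (0 + (j + 1)) / 2 := by omega
        have c1 : Nat.choose 0 ((0 + (j + 1)) / 2) = 0 :=
          Nat.choose_eq_zero_of_lt hlt
        have c2 : Nat.choose 0 ((0 + (j + 1)) / 2 + 1) = 0 :=
          Nat.choose_eq_zero_of_lt (Nat.succ_pos _)
        rw [c1, c2]
        norm_num
      · have hm : (0 + (j + 1)) % 2 = 1 := Nat.odd_iff.mp h
        rw [if_neg (by omega)]
        norm_num
  | succ n ih =>
    intro j
    rcases j with _ | j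
    · rw [cAux_rec0]
      show ((dAux n 1 : ℕ) : ℤ) = _
      exact ih 1
    · rw [cAux_rec]
      show ((dAux n j + dAux n (j + 2) : ℕ) : ℤ) = _
      push_cast
      rw [ih j, ih (j + 2)]

lemma sum_cAux (n : ℕ) : ∀ m : ℕ, ∑ j ∈ Finset.range m, cAux n j =
    (n.choose ((n + 1) / 2) : ℤ) - n.choose ((n + m + 1) / 2) := by
  intro m
  induction m with
  | zero => simp
  | succ m ih =>
    rw [Finset.sum_range_succ, ih]
    have key : cAux n m = (n.choose ((n + m + 1) / 2) : ℤ)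
        - n.choose ((n + m + 1 + 1) / 2) := by
      unfold cAux
      rcases Nat.even_or_odd (n + m) with ⟨t, ht⟩ | ⟨t, ht⟩
      · have h : (n + m) % 2 = 0 := by omega
        have e1 : (n + m) / 2 = t := by omega
        have e2 : (n + m + 1) / 2 = t := by omega
        have e3 : (n + m + 1 + 1) / 2 = t + 1 := by omega
        rw [if_pos h, e1, e2, e3]
      · have h : ¬ (n + m) % 2 = 0 := by omega
        have e2 : (n + m + 1) / 2 = t + 1 := by omega
        have e3 : (n + m + 1 + 1) / 2 = t + 1 := by omega
        rw [if_neg h, e2, e3]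
        ring
    rw [key]
    have : n + (m + 1) + 1 = n + m + 1 + 1 := by omega
    rw [this]
    ring

theorem up_down_total (n : ℕ) :
    totalCount {(0, 1), (0, -1)} n = Nat.choose n (n / 2) := by
  have h1 : ((totalCount {(0, 1), (0, -1)} n : ℕ) : ℤ)
      = (Nat.choose n (n / 2) : ℤ) := by
    rw [totalCount_eq]
    push_cast
    calc (∑ j ∈ Finset.range (n + 1), (dAux n j : ℤ))
        = ∑ j ∈ Finset.range (n + 1), cAux n j :=
          Finset.sum_congr rfl fun j _ => dAux_eq_cAux n j
      _ = (n.choose ((n + 1) / 2) : ℤ) - n.choose ((n + (n + 1) + 1) / 2) :=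
          sum_cAux n (n + 1)
      _ = (n.choose ((n + 1) / 2) : ℤ) := by
          have : (n + (n + 1) + 1) / 2 = n + 1 := by omega
          rw [this, Nat.choose_succ_self]
          ring
      _ = (n.choose (n / 2) : ℤ) := by
          congr 1
          rcases Nat.even_or_odd n with ⟨t, ht⟩ | ⟨t, ht⟩
          · congr 1; omega
          · have h : (n + 1) / 2 ≤ n := by omega
            have := Nat.choose_symm h
            have e : n - (n + 1) / 2 = n / 2 := by omega
            rw [e] at this
            exact this.symm
  exact_mod_cast h1
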